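/- Let R be a left Artinian ring (with identity). Then the complete lattice L of left ideals of R (i.e., of submodules of R as a left module over itself) is hyper-radical free: defining r : ℕ → L by r(0) = ⊤ and r(n+1) = the infimum of the set of all coatoms of the interval [⊥, r(n)] in L, there exists n ∈ ℕ with r(n) = ⊥. -/

import Mathlib

namespace HRF

open Submodule LinearMap Pointwise

variable {R : Type*} [Ring R]

/-- Span of the set product of two left ideals. -/
def mSpan (I A : Submodule R R) : Submodule R R :=
  Submodule.span R ((I : Set R) * (A : Set R))

lemma mem_mSpan_of {I A : Submodule R R} {z a : R} (hz : z ∈ I) (ha : a ∈ A) :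
    z * a ∈ mSpan I A :=
  Submodule.subset_span ⟨z, hz, a, ha, rfl⟩

lemma mSpan_le {I A P : Submodule R R}
    (h : ∀ z ∈ I, ∀ a ∈ A, z * a ∈ P) : mSpan I A ≤ P := by
  refine Submodule.span_le.mpr ?_
  rintro _ ⟨z, hz, a, ha, rfl⟩
  exact h z hz a ha

lemma mSpan_le_right (I A : Submodule R R) : mSpan I A ≤ A :=
  mSpan_le fun z _ a ha => by simpa [smul_eq_mul] using A.smul_mem z ha

lemma mSpan_mono_left {I I' : Submodule R R} (h : I ≤ I') (A : Submodule R R) :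
    mSpan I A ≤ mSpan I' A :=
  Submodule.span_mono (Set.mul_subset_mul_right h)

lemma mSpan_mono_right (I : Submodule R R) {A A' : Submodule R R} (h : A ≤ A') :
    mSpan I A ≤ mSpan I A' :=
  Submodule.span_mono (Set.mul_subset_mul_left h)

/-- A left ideal closed under right multiplication (i.e. two-sided). -/
def RightClosed (I : Submodule R R) : Prop := ∀ z ∈ I, ∀ r : R, z * r ∈ I

lemma RightClosed.mSpan_right {A : Submodule R R}
    (hA : RightClosed A) (J : Submodule R R) : RightClosed (mSpan J A) := by
  intro z hz r
  induction hz using Submodule.span_induction with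
  | mem x hx =>
    obtain ⟨u, hu, v, hv, rfl⟩ := hx
    rw [mul_assoc]
    exact mem_mSpan_of hu (hA v hv r)
  | zero => simpa using (mSpan J A).zero_mem
  | add x y _ _ hx hy => rw [add_mul]; exact (mSpan J A).add_mem hx hy
  | smul a x _ hx => rw [smul_eq_mul, mul_assoc]; exact (mSpan J A).smul_mem a hx

/-- Multiplying a span on the right by an element of a set. -/
lemma mul_mem_span_mul_left {s t : Set R} {x c : R}
    (hx : x ∈ Submodule.span R s) (hc : c ∈ t) : x * c ∈ Submodule.span R (s * t) := by
  induction hx using Submodule.span_induction with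
  | mem y hy => exact Submodule.subset_span ⟨y, hy, c, hc, rfl⟩
  | zero => simpa using (Submodule.span R (s * t)).zero_mem
  | add y z _ _ hy hz => rw [add_mul]; exact Submodule.add_mem _ hy hz
  | smul a y _ hy => rw [smul_eq_mul, mul_assoc, ← smul_eq_mul]; exact Submodule.smul_mem _ a hy

/-- Multiplying a span on the left by an element of a right-closed ideal. -/
lemma mul_mem_span_mul_right {I : Submodule R R} (hI : RightClosed I) {t : Set R} {z y : R}
    (hz : z ∈ I) (hy : y ∈ Submodule.span R t) :
    z * y ∈ Submodule.span R ((I : Set R) * t) := by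
  induction hy using Submodule.span_induction generalizing z with
  | mem w hw => exact Submodule.subset_span ⟨z, hz, w, hw, rfl⟩
  | zero => simpa using (Submodule.span R ((I : Set R) * t)).zero_mem
  | add w v _ _ hw hv => rw [mul_add]; exact Submodule.add_mem _ (hw hz) (hv hz)
  | smul a w _ hw => rw [smul_eq_mul, ← mul_assoc]; exact hw (hI z hz a)

lemma mSpan_assoc {I : Submodule R R} (hI : RightClosed I) (B C : Submodule R R) :
    mSpan I (mSpan B C) = mSpan (mSpan I B) C := by
  have h1 : mSpan I (mSpan B C) = Submodule.span R ((I : Set R) * ((B : Set R) * (C : Set R))) := by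
    apply le_antisymm
    · exact mSpan_le fun z hz a ha => mul_mem_span_mul_right hI hz ha
    · refine Submodule.span_le.mpr ?_
      rintro _ ⟨z, hz, _, ⟨b, hb, c, hc, rfl⟩, rfl⟩
      exact mem_mSpan_of hz (mem_mSpan_of hb hc)
  have h2 : mSpan (mSpan I B) C = Submodule.span R (((I : Set R) * (B : Set R)) * (C : Set R)) := by
    apply le_antisymm
    · exact mSpan_le fun z hz a ha => mul_mem_span_mul_left hz ha
    · refine Submodule.span_le.mpr ?_
      rintro _ ⟨_, ⟨z, hz, b, hb, rfl⟩, c, hc, rfl⟩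
      exact mem_mSpan_of (mem_mSpan_of hz hb) hc
  rw [h1, h2, mul_assoc]

/-- The Jacobson radical as the infimum of all maximal left ideals. -/
def Jrad (R : Type*) [Ring R] : Submodule R R := sInf {m : Submodule R R | IsCoatom m}

lemma Jrad_le_coatom {m : Submodule R R} (hm : IsCoatom m) : Jrad R ≤ m := sInf_le hm

lemma Jrad_rightClosed : RightClosed (Jrad R) := by
  intro z hz r
  refine Submodule.mem_sInf.mpr fun m hm => ?_
  by_cases hr : r ∈ m
  · simpa [smul_eq_mul] using m.smul_mem z hr
  · haveI : IsSimpleModule R (R ⧸ m) := isSimpleModule_iff_isCoatom.mpr hm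
    have hr0 : (Submodule.Quotient.mk r : R ⧸ m) ≠ 0 := by
      simpa [Submodule.Quotient.mk_eq_zero] using hr
    have hsurj := IsSimpleModule.toSpanSingleton_surjective R hr0
    have hker : IsCoatom (LinearMap.ker (LinearMap.toSpanSingleton R (R ⧸ m)
        (Submodule.Quotient.mk r))) :=
      LinearMap.isCoatom_ker_of_surjective hsurj
    have hzker : z ∈ LinearMap.ker (LinearMap.toSpanSingleton R (R ⧸ m)
        (Submodule.Quotient.mk r)) :=
      Submodule.mem_sInf.mp hz _ hker
    have : z • (Submodule.Quotient.mk r : R ⧸ m) = 0 := hzker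
    rwa [← Submodule.Quotient.mk_smul, Submodule.Quotient.mk_eq_zero, smul_eq_mul] at this

lemma Jrad_left_inv {z : R} (hz : z ∈ Jrad R) : ∃ u : R, u * (1 - z) = 1 := by
  by_contra h
  push_neg at h
  have hne : Submodule.span R {1 - z} ≠ (⊤ : Ideal R) := by
    intro htop
    have : (1 : R) ∈ Submodule.span R {1 - z} := htop ▸ Submodule.mem_top
    obtain ⟨u, hu⟩ := Submodule.mem_span_singleton.mp this
    exact h u (by simpa [smul_eq_mul] using hu)
  obtain ⟨m, hm, hle⟩ := Ideal.exists_le_maximal _ hne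
  have hcm : IsCoatom m := Ideal.isMaximal_def.mp hm
  have h1 : (1 - z) ∈ m := hle (Submodule.mem_span_singleton_self _)
  have hzm : z ∈ m := Jrad_le_coatom hcm hz
  have : (1 : R) ∈ m := by simpa using m.add_mem h1 hzm
  exact hcm.1 ((Submodule.eq_top_iff').mpr fun x => by
    simpa [smul_eq_mul] using m.smul_mem x this)


lemma mSpan_span_singleton {I : Submodule R R} (hI : RightClosed I) (a : R) :
    mSpan I (Submodule.span R {a}) = I.map (LinearMap.toSpanSingleton R R a) := by
  apply le_antisymm
  · refine mSpan_le fun z hz y hy => ?_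
    obtain ⟨r, rfl⟩ := Submodule.mem_span_singleton.mp hy
    rw [smul_eq_mul, ← mul_assoc]
    exact ⟨z * r, hI z hz r, rfl⟩
  · rintro _ ⟨z, hz, rfl⟩
    exact mem_mSpan_of hz (Submodule.mem_span_singleton_self a)

lemma mSpan_bot_left (A : Submodule R R) : mSpan (⊥ : Submodule R R) A = ⊥ :=
  le_bot_iff.mp (mSpan_le fun z hz a _ => by
    simp_all [Submodule.mem_bot])

variable [IsArtinianRing R]


lemma Jrad_finite : ∃ t : Finset (Submodule R R),
    (∀ m ∈ t, IsCoatom m) ∧ t.inf id = Jrad R := by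
  classical
  obtain ⟨K, ⟨t, ht, rfl⟩, hmin⟩ := IsArtinian.set_has_minimal
    {K : Submodule R R | ∃ t : Finset (Submodule R R), (∀ m ∈ t, IsCoatom m) ∧ K = t.inf _root_.id}
    ⟨⊤, ∅, by simp, by simp⟩
  refine ⟨t, ht, le_antisymm ?_ (Finset.le_inf fun m hm => Jrad_le_coatom (ht m hm))⟩
  refine le_sInf fun m hm => ?_
  have hmem : (insert m t).inf _root_.id ∈
      {K : Submodule R R | ∃ t : Finset (Submodule R R), (∀ m ∈ t, IsCoatom m) ∧ K = t.inf _root_.id} :=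
    ⟨insert m t, fun x hx => by
      rcases Finset.mem_insert.mp hx with h | h
      · exact h ▸ hm
      · exact ht x h, rfl⟩
  have hle : (insert m t).inf _root_.id ≤ t.inf _root_.id := by
    rw [Finset.inf_insert]; exact inf_le_right
  have := hmin _ hmem
  have heq : (insert m t).inf _root_.id = t.inf _root_.id := by
    by_contra hne
    exact this (lt_of_le_of_ne hle hne)
  calc t.inf _root_.id = (insert m t).inf _root_.id := heq.symm
  _ ≤ m := by rw [Finset.inf_insert]; exact inf_le_left

lemma rightClosed_iter (n : ℕ) : RightClosed ((mSpan (Jrad R))^[n] (Jrad R) : Submodule R R) := by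
  induction n with
  | zero => exact Jrad_rightClosed
  | succ k ih =>
    rw [Function.iterate_succ_apply']
    exact RightClosed.mSpan_right ih _

lemma iter_antitone : Antitone (fun n => ((mSpan (Jrad R))^[n] (Jrad R) : Submodule R R)) := by
  apply antitone_nat_of_succ_le
  intro n
  rw [Function.iterate_succ_apply']
  exact mSpan_le_right _ _

lemma exists_mSpan_pow_bot : ∃ n : ℕ, (mSpan (Jrad R))^[n] (Jrad R) = ⊥ := by
  obtain ⟨A, hmem, hmin⟩ := IsArtinian.set_has_minimal
    (Set.range fun n => ((mSpan (Jrad R))^[n] (Jrad R) : Submodule R R)) ⟨Jrad R, 0, rfl⟩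
  obtain ⟨n₀, hA⟩ := hmem
  simp only at hA
  have hIrc : RightClosed A := hA ▸ rightClosed_iter n₀
  have hAle : A ≤ Jrad R := by
    rw [← hA]
    exact iter_antitone (Nat.zero_le n₀)
  have hstab : mSpan (Jrad R) A = A := by
    have h4 : ((mSpan (Jrad R))^[n₀+1] (Jrad R) : Submodule R R) = mSpan (Jrad R) A := by
      rw [Function.iterate_succ_apply', hA]
    exact eq_of_le_of_not_lt (mSpan_le_right _ _) (hmin _ ⟨n₀ + 1, h4⟩)
  have hkey : ∀ k, mSpan ((mSpan (Jrad R))^[k] (Jrad R)) A = A := by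
    intro k
    induction k with
    | zero => exact hstab
    | succ k ih => rw [Function.iterate_succ_apply', ← mSpan_assoc Jrad_rightClosed, ih, hstab]
  have hII : mSpan A A = A := by
    have := hkey n₀
    rwa [hA] at this
  refine ⟨n₀, ?_⟩
  rw [hA]
  by_contra hIne
  obtain ⟨A₂, hA₂, hminA⟩ := IsArtinian.set_has_minimal
    {B : Submodule R R | mSpan A B ≠ ⊥} ⟨A, by show mSpan A A ≠ ⊥; rw [hII]; exact hIne⟩
  obtain ⟨a, haA, z, hzI, hza⟩ : ∃ a ∈ A₂, ∃ z ∈ A, z * a ≠ 0 := by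
    by_contra hc
    push_neg at hc
    exact hA₂ (le_bot_iff.mp (mSpan_le fun z hz y hy => by
      rw [Submodule.mem_bot]; exact hc y hy z hz))
  have hBA : mSpan A (Submodule.span R {a}) ≤ A₂ :=
    le_trans (mSpan_mono_right _ ((Submodule.span_singleton_le_iff_mem a A₂).mpr haA))
      (mSpan_le_right _ _)
  have hzaB : z * a ∈ mSpan A (Submodule.span R {a}) :=
    mem_mSpan_of hzI (Submodule.mem_span_singleton_self a)
  have hBsig : mSpan A (mSpan A (Submodule.span R {a})) ≠ ⊥ := by
    rw [mSpan_assoc hIrc, hII]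
    intro h
    exact hza ((Submodule.mem_bot R).mp (h ▸ hzaB))
  have hBeqA : mSpan A (Submodule.span R {a}) = A₂ :=
    eq_of_le_of_not_lt hBA (hminA _ hBsig)
  have haB : a ∈ mSpan A (Submodule.span R {a}) := hBeqA ▸ haA
  rw [mSpan_span_singleton hIrc] at haB
  obtain ⟨z', hz'I, hz'a⟩ := haB
  obtain ⟨u, hu⟩ := Jrad_left_inv (hAle hz'I)
  have ha0 : a = 0 := by
    have h1 : (1 - z') * a = 0 := by
      have hz'aa : z' * a = a := by
        simpa [LinearMap.toSpanSingleton_apply, smul_eq_mul] using hz'a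
      rw [sub_mul, one_mul, hz'aa, sub_self]
    calc a = 1 * a := (one_mul a).symm
    _ = u * (1 - z') * a := by rw [hu]
    _ = u * ((1 - z') * a) := by rw [mul_assoc]
    _ = 0 := by rw [h1, mul_zero]
  exact hza (by rw [ha0, mul_zero])

lemma mSpan_Jrad_lt {N : Submodule R R} (hN : N ≠ ⊥) : mSpan (Jrad R) N < N := by
  refine lt_of_le_of_ne (mSpan_le_right _ _) fun heq => ?_
  have hkey : ∀ k, mSpan ((mSpan (Jrad R))^[k] (Jrad R)) N = N := by
    intro k
    induction k with
    | zero => exact heq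
    | succ k ih =>
      rw [Function.iterate_succ_apply', ← mSpan_assoc Jrad_rightClosed, ih, heq]
  obtain ⟨n, hn⟩ := exists_mSpan_pow_bot (R := R)
  have := hkey n
  rw [hn, mSpan_bot_left] at this
  exact hN this.symm

lemma ssProd (M N : Type*) [AddCommGroup M] [Module R M] [AddCommGroup N] [Module R N]
    [IsSemisimpleModule R M] [IsSemisimpleModule R N] : IsSemisimpleModule R (M × N) := by
  refine isSemisimpleModule_of_isSemisimpleModule_submodule'
    (p := fun b : Bool => if b then LinearMap.range (LinearMap.inl R M N)
      else LinearMap.range (LinearMap.inr R M N)) (fun b => ?_) ?_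
  · cases b
    · simpa using IsSemisimpleModule.congr
        (LinearEquiv.ofInjective (LinearMap.inr R M N) LinearMap.inr_injective).symm
    · simpa using IsSemisimpleModule.congr
        (LinearEquiv.ofInjective (LinearMap.inl R M N) LinearMap.inl_injective).symm
  · rw [iSup_bool_eq]
    simpa using LinearMap.sup_range_inl_inr

lemma ss_quot (t : Finset (Submodule R R)) (ht : ∀ m ∈ t, IsCoatom m) :
    IsSemisimpleModule R (R ⧸ (t.inf _root_.id : Submodule R R)) := by
  classical
  induction t using Finset.induction_on with
  | empty =>
    haveI : Subsingleton (R ⧸ ((∅ : Finset (Submodule R R)).inf id : Submodule R R)) := by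
      rw [Finset.inf_empty]
      exact Submodule.Quotient.subsingleton_iff.mpr rfl
    exact (isSemisimpleModule_iff R _).mpr Subsingleton.instComplementedLattice
  | @insert a t hat IH =>
    have hcoa : IsCoatom a := ht a (Finset.mem_insert_self a t)
    haveI ihss : IsSemisimpleModule R (R ⧸ (t.inf _root_.id : Submodule R R)) :=
      IH fun m hm => ht m (Finset.mem_insert_of_mem hm)
    haveI : IsSimpleModule R (R ⧸ a) := isSimpleModule_iff_isCoatom.mpr hcoa
    haveI : IsSemisimpleModule R ((R ⧸ a) × (R ⧸ (t.inf _root_.id : Submodule R R))) :=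
      ssProd _ _
    set f : R →ₗ[R] (R ⧸ a) × (R ⧸ (t.inf _root_.id : Submodule R R)) :=
      (a.mkQ).prod ((t.inf _root_.id : Submodule R R).mkQ) with hf
    have hker : LinearMap.ker f = ((insert a t).inf _root_.id : Submodule R R) := by
      rw [hf, LinearMap.ker_prod, Submodule.ker_mkQ, Submodule.ker_mkQ, Finset.inf_insert]
      rfl
    rw [← hker]
    exact IsSemisimpleModule.congr f.quotKerEquivRange

lemma ss_quot_of_Jrad_le {I : Submodule R R} (h : Jrad R ≤ I) :
    IsSemisimpleModule R (R ⧸ I) := by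
  obtain ⟨t, ht, hinf⟩ := Jrad_finite (R := R)
  haveI : IsSemisimpleModule R (R ⧸ Jrad R) := hinf ▸ ss_quot t ht
  exact IsSemisimpleModule.congr (Submodule.quotientQuotientEquivQuotient (Jrad R) I h).symm

lemma ss_of_killed (M : Type*) [AddCommGroup M] [Module R M]
    (h : ∀ z ∈ Jrad R, ∀ x : M, z • x = 0) : IsSemisimpleModule R M := by
  refine isSemisimpleModule_of_isSemisimpleModule_submodule'
    (p := fun x : M => Submodule.span R {x}) (fun x => ?_) ?_
  · haveI : IsSemisimpleModule R (R ⧸ LinearMap.ker (LinearMap.toSpanSingleton R M x)) :=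
      ss_quot_of_Jrad_le fun z hz => LinearMap.mem_ker.mpr (by
        simpa [LinearMap.toSpanSingleton_apply] using h z hz x)
    exact IsSemisimpleModule.congr
      ((LinearEquiv.ofEq _ _ (LinearMap.span_singleton_eq_range R M x)).trans
        (LinearMap.toSpanSingleton R M x).quotKerEquivRange.symm)
  · rw [eq_top_iff]
    intro x _
    exact Submodule.mem_iSup_of_mem x (Submodule.mem_span_singleton_self x)

lemma exists_coatom {N : Submodule R R} (hN : N ≠ ⊥) :
    ∃ m, m < N ∧ ¬ ∃ x, m < x ∧ x < N := by
  have hP : mSpan (Jrad R) N < N := mSpan_Jrad_lt hN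
  set P' : Submodule R ↥N := (mSpan (Jrad R) N).comap N.subtype with hP'
  have hP'top : P' < ⊤ := by
    obtain ⟨x, hxN, hxP⟩ := SetLike.exists_of_lt hP
    refine lt_top_iff_ne_top.mpr fun h => hxP ?_
    have : (⟨x, hxN⟩ : ↥N) ∈ P' := h ▸ Submodule.mem_top
    exact this
  haveI : Nontrivial (↥N ⧸ P') := Submodule.Quotient.nontrivial_iff.mpr hP'top.ne
  haveI : IsSemisimpleModule R (↥N ⧸ P') := by
    refine ss_of_killed _ fun z hz q => ?_
    obtain ⟨y, rfl⟩ := Submodule.Quotient.mk_surjective P' q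
    rw [← Submodule.Quotient.mk_smul, Submodule.Quotient.mk_eq_zero]
    show ((z • y : ↥N) : R) ∈ mSpan (Jrad R) N
    have : ((z • y : ↥N) : R) = z * (y : R) := by
      simp [smul_eq_mul]
    rw [this]
    exact mem_mSpan_of hz y.2
  haveI : IsAtomic (Submodule R (↥N ⧸ P')) :=
    isAtomic_of_orderBot_wellFounded_lt wellFounded_lt
  haveI : IsCoatomic (Submodule R (↥N ⧸ P')) :=
    isCoatomic_of_isAtomic_of_complementedLattice_of_isModular
  rcases IsCoatomic.eq_top_or_exists_le_coatom (⊥ : Submodule R (↥N ⧸ P')) with h | ⟨mq, hmq, -⟩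
  · exact absurd h.symm top_ne_bot
  -- pull the coatom back to a coatom of the lattice of submodules of ↥N
  have hm1 : IsCoatom (mq.comap P'.mkQ) := by
    constructor
    · intro htop
      have := Submodule.map_comap_eq_of_surjective P'.mkQ_surjective mq
      rw [htop, Submodule.map_top, Submodule.range_mkQ] at this
      exact hmq.1 this.symm
    · intro x hx
      have hker : P' ≤ x := le_trans (fun y hy => by
        show P'.mkQ y ∈ mq
        have : P'.mkQ y = 0 := by
          rwa [← LinearMap.mem_ker, Submodule.ker_mkQ]
        rw [this]; exact mq.zero_mem) hx.le
      have hcm : (x.map P'.mkQ).comap P'.mkQ = x := by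
        rw [Submodule.comap_map_eq, Submodule.ker_mkQ, sup_eq_left.mpr hker]
      have hlt : mq < x.map P'.mkQ := by
        refine lt_of_le_of_ne ?_ fun heq => ?_
        · rw [← Submodule.map_comap_eq_of_surjective P'.mkQ_surjective mq]
          exact Submodule.map_mono hx.le
        · rw [← heq] at hcm
          exact hx.ne' hcm.symm
      have := hmq.2 _ hlt
      rw [← hcm, this, Submodule.comap_top]
  refine ⟨(mq.comap P'.mkQ).map N.subtype, ?_, ?_⟩
  · refine lt_of_le_of_ne (Submodule.map_subtype_le N _) fun heq => ?_
    have h1 : ((mq.comap P'.mkQ).map N.subtype).comap N.subtype = mq.comap P'.mkQ := by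
      rw [Submodule.comap_map_eq, Submodule.ker_subtype, sup_bot_eq]
    rw [heq, Submodule.comap_subtype_self] at h1
    exact hm1.1 h1.symm
  · rintro ⟨x, hmx, hxN⟩
    have h1 : ((mq.comap P'.mkQ).map N.subtype).comap N.subtype = mq.comap P'.mkQ := by
      rw [Submodule.comap_map_eq, Submodule.ker_subtype, sup_bot_eq]
    have h2 : (x.comap N.subtype).map N.subtype = x := by
      rw [Submodule.map_comap_subtype, inf_eq_right.mpr hxN.le]
    have hlt : mq.comap P'.mkQ < x.comap N.subtype := by
      refine lt_of_le_of_ne ?_ fun heq => ?_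
      · rw [← h1]
        exact Submodule.comap_mono hmx.le
      · have h3 := congrArg (Submodule.map N.subtype) heq
        rw [h2] at h3
        exact hmx.ne h3
    have := hm1.2 _ hlt
    rw [this, Submodule.map_top, Submodule.range_subtype] at h2
    exact hxN.ne h2.symm

end HRF

/-- The lattice of left ideals of a left Artinian ring is hyper-radical free: the
iterated radical series `r 0 = ⊤`, `r (n+1) = ` infimum inside `[⊥, r n]` of the set
of coatoms of the interval `[⊥, r n]` (equal to `r n` if there are none), reaches `⊥`
after finitely many steps. -/
theorem stmt_12 (R : Type*) [Ring R] [IsArtinianRing R]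
    (r : ℕ → Submodule R R) (h0 : r 0 = ⊤)
    (hsucc : ∀ n, r (n + 1) =
      r n ⊓ sInf {m : Submodule R R | m < r n ∧ ¬ ∃ x, m < x ∧ x < r n}) :
    ∃ n, r n = ⊥ := by
  by_contra h
  push_neg at h
  obtain ⟨A, ⟨n, rfl⟩, hmin⟩ := IsArtinian.set_has_minimal (Set.range r) ⟨r 0, 0, rfl⟩
  obtain ⟨m, hm1, hm2⟩ := HRF.exists_coatom (h n)
  have hlt : r (n + 1) < r n := by
    calc r (n + 1) ≤ m := by
          rw [hsucc]; exact le_trans inf_le_right (sInf_le ⟨hm1, hm2⟩)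
    _ < r n := hm1
  exact hmin (r (n + 1)) ⟨n + 1, rfl⟩ hlt
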